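/- The Lindelöf degree of the G_δ modification of the compact space (2^ω)^{𝔠⁺} equals 𝔠⁺. In particular, there is a G_δ cover of (2^ω)^{𝔠⁺} with no subcover of cardinality at most 𝔠. -/

import Mathlib

open Set Cardinal TopologicalSpace

universe u

private lemma aux_bounded {c : Cardinal.{u}} (hreg : c.IsRegular) (hc : ℵ₀ < c)
    (g : ℕ → c.ord.ToType) :
    ∃ b : c.ord.ToType, ∀ n, g n < b := by
  by_contra h
  push_neg at h
  letI : IsWellOrder c.ord.ToType (· < ·) := isWellOrder_lt
  have hub : Set.Unbounded (· < ·) (Set.range g) := by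
    intro a
    obtain ⟨n, hn⟩ := h a
    exact ⟨g n, ⟨n, rfl⟩, not_lt.mpr hn⟩
  have h1 : Ordinal.cof (Ordinal.type ((· < ·) : c.ord.ToType → c.ord.ToType → Prop)) ≤
      #(Set.range g) := by
    rw [Ordinal.cof_type]
    exact Order.cof_le fun a => let ⟨b, hb, hab⟩ := hub a; ⟨b, hb, not_lt.mp hab⟩
  rw [Ordinal.type_toType] at h1
  have h2 : c ≤ #(Set.range g) := hreg.2.trans h1
  have h3 : Cardinal.lift.{0} #(Set.range g) ≤ Cardinal.lift.{u} #ℕ := mk_range_le_lift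
  rw [Cardinal.lift_uzero, Cardinal.mk_nat, Cardinal.lift_aleph0] at h3
  exact absurd (h2.trans h3) (not_le.mpr hc)

/-- `(𝔠⁺)^{ℵ₀} = 𝔠⁺` : countable powers of a set of size at most `𝔠⁺` have size at most `𝔠⁺`. -/
private lemma aux_pow_aleph0 (T : Type u) (hT : #T ≤ Order.succ continuum) :
    #(ℕ → T) ≤ Order.succ continuum := by
  set c : Cardinal.{u} := Order.succ continuum with hc
  have hreg : c.IsRegular := isRegular_succ aleph0_le_continuum
  have haleph : ℵ₀ < c := aleph0_le_continuum.trans_lt (Order.lt_succ continuum)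
  set W := c.ord.ToType with hW
  have hWT : #W = c := by rw [hW, Cardinal.mk_toType, Cardinal.card_ord]
  -- embed T into W
  obtain ⟨f⟩ : Nonempty (T ↪ W) := by
    rw [← Cardinal.le_def, hWT]; exact hT
  have step1 : #(ℕ → T) ≤ #(ℕ → W) :=
    Cardinal.mk_le_of_injective (f.injective.comp_left (g := f))
  -- bound #(ℕ → W)
  have step2 : #(ℕ → W) ≤ c := by
    have hcov : (Set.univ : Set (ℕ → W)) = ⋃ b : W, {g : ℕ → W | ∀ n, g n < b} := by
      apply Set.eq_of_subset_of_subset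
      · intro g _
        obtain ⟨b, hb⟩ := aux_bounded hreg haleph g
        exact Set.mem_iUnion.mpr ⟨b, hb⟩
      · exact fun _ _ => trivial
    have hsmall : ∀ b : W, #({g : ℕ → W | ∀ n, g n < b}) ≤ continuum := by
      intro b
      have hinj : #({g : ℕ → W | ∀ n, g n < b}) ≤ #(ℕ → Set.Iio b) := by
        refine Cardinal.mk_le_of_injective (f := fun g n => (⟨g.1 n, g.2 n⟩ : Set.Iio b)) ?_
        intro g g' hgg
        ext n
        exact congrArg Subtype.val (congrFun hgg n)
      refine hinj.trans ?_
      have harrow : #(ℕ → Set.Iio b) = #(Set.Iio b) ^ (ℵ₀ : Cardinal.{u}) := by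
        rw [Cardinal.mk_arrow, Cardinal.lift_uzero, Cardinal.mk_nat, Cardinal.lift_aleph0]
      rw [harrow]
      have hIio : #(Set.Iio b) ≤ continuum := by
        have h5 := Cardinal.mk_Iio_ord_toType b
        exact Order.lt_succ_iff.mp h5
      calc #(Set.Iio b) ^ (ℵ₀ : Cardinal.{u}) ≤ continuum ^ (ℵ₀ : Cardinal.{u}) :=
            Cardinal.power_le_power_right hIio
        _ = continuum := continuum_power_aleph0
    calc #(ℕ → W) = #(Set.univ : Set (ℕ → W)) := Cardinal.mk_univ.symm
      _ = #(⋃ b : W, {g : ℕ → W | ∀ n, g n < b}) := by rw [hcov]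
      _ ≤ #W * ⨆ b : W, #({g : ℕ → W | ∀ n, g n < b}) := Cardinal.mk_iUnion_le _
      _ ≤ c * continuum := by
          have hsup : ⨆ b : W, #({g : ℕ → W | ∀ n, g n < b}) ≤ continuum := ciSup_le' hsmall
          exact mul_le_mul' (le_of_eq hWT) hsup
      _ = c := by
          rw [Cardinal.mul_eq_max haleph.le aleph0_le_continuum]
          exact max_eq_left (Order.le_succ continuum)
  exact step1.trans step2

/-- Every set open in the Gδ-modification of a product of second countable spaces contains a
countable-support cylinder around each of its points. -/
private lemma aux_cylinder {I : Type u} {U : Set (I → ℕ → Bool)}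
    (hU : TopologicalSpace.GenerateOpen {s : Set (I → ℕ → Bool) | IsGδ s} U) :
    ∀ x ∈ U, ∃ S : Set I, S.Countable ∧ {y | ∀ i ∈ S, y i = x i} ⊆ U := by
  induction hU with
  | @basic G hG =>
      intro x hx
      obtain ⟨T, hTopen, hTcount, rfl⟩ := hG
      have key : ∀ t : T, ∃ F : Finset I, {y : I → ℕ → Bool | ∀ i ∈ F, y i = x i} ⊆ (t : Set _) := by
        rintro ⟨t, ht⟩
        have hxt : x ∈ t := hx t ht
        obtain ⟨F, v, hv, hsub⟩ := (isOpen_pi_iff.mp (hTopen t ht)) x hxt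
        refine ⟨F, fun y hy => hsub ?_⟩
        intro i hi
        have h1 : y i = x i := hy i hi
        rw [h1]
        exact (hv i hi).2
      choose F hF using key
      have : Countable T := hTcount.to_subtype
      refine ⟨⋃ t : T, (F t : Set I), countable_iUnion fun t => (F t).countable_toSet, ?_⟩
      intro y hy
      rintro t ht
      refine hF ⟨t, ht⟩ ?_
      intro i hi
      exact hy i (Set.mem_iUnion.mpr ⟨⟨t, ht⟩, hi⟩)
  | univ =>
      exact fun x _ => ⟨∅, countable_empty, fun y _ => trivial⟩
  | inter U V hU hV ihU ihV =>
      intro x hx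
      obtain ⟨S₁, hc₁, hs₁⟩ := ihU x hx.1
      obtain ⟨S₂, hc₂, hs₂⟩ := ihV x hx.2
      refine ⟨S₁ ∪ S₂, hc₁.union hc₂, fun y hy => ⟨hs₁ fun i hi => hy i (Or.inl hi),
        hs₂ fun i hi => hy i (Or.inr hi)⟩⟩
  | sUnion 𝔖 h ih =>
      intro x hx
      obtain ⟨u, hu, hxu⟩ := hx
      obtain ⟨S, hSc, hSs⟩ := ih u hu x hxu
      exact ⟨S, hSc, hSs.trans (Set.subset_sUnion_of_mem hu)⟩

/-- The Lindelöf degree of the G_δ modification of the compact space `(2^ω)^{𝔠⁺}` equals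
`𝔠⁺`: every open cover of the G_δ modification has a subcover of size at most `𝔠⁺`, and there
is a G_δ cover with no subcover of cardinality at most `𝔠`. -/
theorem lindelof_degree_gdelta_cantor_power
    (I : Type u) (hI : #I = Order.succ continuum) :
    (∀ 𝒰 : Set (Set (I → ℕ → Bool)),
      (∀ u ∈ 𝒰,
        @IsOpen _ (TopologicalSpace.generateFrom {s : Set (I → ℕ → Bool) | IsGδ s}) u) →
      ⋃₀ 𝒰 = Set.univ →
      ∃ 𝒱 ⊆ 𝒰, #𝒱 ≤ Order.succ continuum ∧ ⋃₀ 𝒱 = Set.univ) ∧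
    (∃ 𝒰 : Set (Set (I → ℕ → Bool)), (∀ u ∈ 𝒰, IsGδ u) ∧ ⋃₀ 𝒰 = Set.univ ∧
      ∀ 𝒱 ⊆ 𝒰, #𝒱 ≤ continuum → ⋃₀ 𝒱 ≠ Set.univ) := by
  classical
  have hIne : Nonempty I := by
    rw [← Cardinal.mk_ne_zero_iff, hI]
    exact (Cardinal.succ_ne_zero continuum)
  have hCont : #(ℕ → Bool) = continuum := by
    rw [Cardinal.mk_arrow, Cardinal.lift_uzero, Cardinal.lift_uzero, Cardinal.mk_nat,
      Cardinal.mk_bool, two_power_aleph0]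
  constructor
  · -- upper bound
    intro 𝒰 hopen hcover
    obtain ⟨U₀, hU₀⟩ : ∃ u, u ∈ 𝒰 := by
      have : (fun _ _ => false : I → ℕ → Bool) ∈ ⋃₀ 𝒰 := by rw [hcover]; trivial
      obtain ⟨u, hu, _⟩ := this
      exact ⟨u, hu⟩
    set K := ℕ → I × (ℕ → Bool) with hK
    let cylk : K → Set (I → ℕ → Bool) := fun k => {y | ∀ n, y (k n).1 = (k n).2}
    let Pick : K → Set (I → ℕ → Bool) := fun k =>
      if h : ∃ u ∈ 𝒰, cylk k ⊆ u then h.choose else U₀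
    have hPickmem : ∀ k, Pick k ∈ 𝒰 := by
      intro k
      by_cases h : ∃ u ∈ 𝒰, cylk k ⊆ u
      · simp only [Pick, dif_pos h]; exact h.choose_spec.1
      · simp only [Pick, dif_neg h]; exact hU₀
    have hPicksub : ∀ k, (∃ u ∈ 𝒰, cylk k ⊆ u) → cylk k ⊆ Pick k := by
      intro k h
      simp only [Pick, dif_pos h]
      exact h.choose_spec.2
    refine ⟨Set.range Pick, ?_, ?_, ?_⟩
    · rintro _ ⟨k, rfl⟩; exact hPickmem k
    · refine le_trans Cardinal.mk_range_le ?_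
      refine aux_pow_aleph0 (I × (ℕ → Bool)) ?_
      rw [Cardinal.mk_prod, Cardinal.lift_uzero, hI, hCont, Cardinal.lift_continuum]
      rw [Cardinal.mul_eq_max (aleph0_le_continuum.trans (Order.le_succ continuum))
        aleph0_le_continuum]
      exact le_of_eq (max_eq_left (Order.le_succ continuum))
    · apply Set.eq_univ_of_forall
      intro x
      have hx : x ∈ ⋃₀ 𝒰 := by rw [hcover]; trivial
      obtain ⟨u, hu, hxu⟩ := hx
      have hgen : TopologicalSpace.GenerateOpen {s : Set (I → ℕ → Bool) | IsGδ s} u :=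
        hopen u hu
      obtain ⟨S, hScount, hSsub⟩ := aux_cylinder hgen x hxu
      obtain ⟨f, hf⟩ : ∃ f : ℕ → I, S ⊆ Set.range f := by
        rcases S.eq_empty_or_nonempty with hS | hS
        · exact ⟨fun _ => Classical.arbitrary I, by rw [hS]; exact Set.empty_subset _⟩
        · obtain ⟨f, hf⟩ := hScount.exists_eq_range hS
          exact ⟨f, hf.le⟩
      set k : K := fun n => (f n, x (f n)) with hk
      have hxk : x ∈ cylk k := fun n => rfl
      have hsubu : cylk k ⊆ u := by
        intro y hy
        apply hSsub
        intro i hi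
        obtain ⟨n, rfl⟩ := hf hi
        exact hy n
      have hmem : x ∈ Pick k := hPicksub k ⟨u, hu, hsubu⟩ hxk
      exact ⟨Pick k, ⟨k, rfl⟩, hmem⟩
  · -- lower bound
    let E : I → I → Set (I → ℕ → Bool) := fun i j => {x | x i = x j}
    refine ⟨{u | ∃ p : I × I, p.1 ≠ p.2 ∧ u = E p.1 p.2}, ?_, ?_, ?_⟩
    · rintro u ⟨⟨i, j⟩, hne, rfl⟩
      have hEq : E i j = ⋂ n, {x : I → ℕ → Bool | x i n = x j n} := by
        ext x
        simp only [E, Set.mem_setOf_eq, Set.mem_iInter, funext_iff]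
      rw [hEq]
      refine IsGδ.iInter fun n => ?_
      refine IsOpen.isGδ ?_
      have hcont : Continuous fun x : I → ℕ → Bool => (x i n, x j n) := by
        exact Continuous.prodMk ((continuous_apply n).comp (continuous_apply i))
          ((continuous_apply n).comp (continuous_apply j))
      have : {x : I → ℕ → Bool | x i n = x j n} =
          (fun x : I → ℕ → Bool => (x i n, x j n)) ⁻¹' {p : Bool × Bool | p.1 = p.2} := rfl
      rw [this]
      exact (isOpen_discrete _).preimage hcont
    · apply Set.eq_univ_of_forall
      intro x
      have hninj : ¬ Function.Injective x := by
        intro hinj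
        have h1 : Cardinal.lift.{0} #I ≤ Cardinal.lift.{u} #(ℕ → Bool) :=
          Cardinal.lift_mk_le'.mpr ⟨⟨x, hinj⟩⟩
        rw [Cardinal.lift_uzero, hI, hCont, Cardinal.lift_continuum] at h1
        exact absurd h1 (not_le.mpr (Order.lt_succ continuum))
      obtain ⟨i, j, hij, hne⟩ := Function.not_injective_iff.mp hninj
      exact ⟨E i j, ⟨(i, j), hne, rfl⟩, hij⟩
    · intro 𝒱 h𝒱 hcard hcovV
      have hpair : ∀ v : 𝒱, ∃ p : I × I, p.1 ≠ p.2 ∧ (v : Set (I → ℕ → Bool)) = E p.1 p.2 :=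
        fun v => h𝒱 v.2
      choose p hpne hpe using hpair
      set T : Set I := ⋃ v : 𝒱, {(p v).1, (p v).2} with hT
      have hTcard : #T ≤ continuum := by
        calc #T ≤ #(𝒱 : Set _) * ⨆ v : 𝒱, #({(p v).1, (p v).2} : Set I) :=
              Cardinal.mk_iUnion_le _
          _ ≤ continuum * ℵ₀ := by
              have hsup2 : ⨆ v : 𝒱, #({(p v).1, (p v).2} : Set I) ≤ ℵ₀ := by
                refine ciSup_le' fun v => ?_
                have hfin : ({(p v).1, (p v).2} : Set I).Finite :=
                  (Set.finite_singleton _).insert _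
                haveI := hfin.countable.to_subtype
                exact Cardinal.mk_le_aleph0
              exact mul_le_mul' hcard hsup2
          _ = continuum := by
              rw [Cardinal.mul_eq_max aleph0_le_continuum (le_refl ℵ₀)]
              exact max_eq_left aleph0_le_continuum
      obtain ⟨g⟩ : Nonempty (T ↪ (ℕ → Bool)) := by
        rw [← Cardinal.lift_mk_le']
        rw [Cardinal.lift_uzero, hCont, Cardinal.lift_continuum]
        exact hTcard
      let z : I → ℕ → Bool := fun i => if h : i ∈ T then g ⟨i, h⟩ else (fun _ => false)
      have hz : z ∈ ⋃₀ 𝒱 := by rw [hcovV]; trivial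
      obtain ⟨v, hv, hzv⟩ := hz
      have h1 : (p ⟨v, hv⟩).1 ∈ T := Set.mem_iUnion.mpr ⟨⟨v, hv⟩, Or.inl rfl⟩
      have h2 : (p ⟨v, hv⟩).2 ∈ T := Set.mem_iUnion.mpr ⟨⟨v, hv⟩, Or.inr rfl⟩
      have heq : z (p ⟨v, hv⟩).1 = z (p ⟨v, hv⟩).2 := by
        have h0 : ((⟨v, hv⟩ : 𝒱) : Set (I → ℕ → Bool)) = E (p ⟨v, hv⟩).1 (p ⟨v, hv⟩).2 :=
          hpe ⟨v, hv⟩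
        have h' : z ∈ E (p ⟨v, hv⟩).1 (p ⟨v, hv⟩).2 := by rw [← h0]; exact hzv
        exact h'
      have : g ⟨(p ⟨v, hv⟩).1, h1⟩ = g ⟨(p ⟨v, hv⟩).2, h2⟩ := by
        simpa only [z, dif_pos h1, dif_pos h2] using heq
      have := g.injective this
      exact hpne ⟨v, hv⟩ (congrArg Subtype.val this)
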